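/- For r ≥ 0 and Δ ≥ D ≥ 2r+3, the digraph Γ_Δ(D,−r) is (D+r)-reachable: for any two vertices u and v (not necessarily distinct), there exists a directed walk from u to v of length exactly D+r. -/

import Mathlib

/-- `l` is a vertex of the cycle prefix digraph `Γ_Δ(D)`: a sequence of `D`
distinct letters from the alphabet `{1, …, Δ+1}`. -/
def IsVtx (Δ D : ℕ) (l : List ℕ) : Prop :=
  l.length = D ∧ l.Nodup ∧ ∀ x ∈ l, 1 ≤ x ∧ x ≤ Δ + 1

/-- Adjacency in `Γ_Δ(D, -r)` (for `r = 0` this is `Γ_Δ(D)` itself): arcs are the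
rotations `R_k` for `r+2 ≤ k ≤ D` (0-indexed: move the letter at index `j`,
`r+1 ≤ j ≤ D-1`, to the front) and the shifts `S_y` for letters `y` not in the
sequence. -/
def adjR (Δ D r : ℕ) (X Y : List ℕ) : Prop :=
  IsVtx Δ D X ∧ IsVtx Δ D Y ∧
    ((∃ j, r + 1 ≤ j ∧ j < D ∧ Y = X.getD j 0 :: X.eraseIdx j) ∨
     (∃ y, y ∉ X ∧ Y = y :: X.dropLast))

/-- `w` is a directed walk of length `n` from `u` to `v` in the digraph with
adjacency relation `A`. -/
def IsWalk {V : Type*} (A : V → V → Prop) (u v : V) (n : ℕ) (w : ℕ → V) : Prop :=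
  w 0 = u ∧ w n = v ∧ ∀ i < n, A (w i) (w (i + 1))

/-- Directed distance: the least length of a directed walk from `u` to `v`. -/
noncomputable def cpDist {V : Type*} (A : V → V → Prop) (u v : V) : ℕ :=
  sInf {n | ∃ w, IsWalk A u v n w}

namespace CPNAux

/-- basic decomposition of a nonempty list -/
lemma head_decomp (l : List ℕ) (h : 0 < l.length) : l = l.getD 0 0 :: l.tail := by
  cases l with
  | nil => simp at h
  | cons a t => simp

lemma mid_getD (A B : List ℕ) (c : ℕ) : (A ++ c :: B).getD A.length 0 = c := by
  rw [List.getD_append_right _ _ _ _ le_rfl]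
  simp

lemma mid_eraseIdx (A B : List ℕ) (c : ℕ) : (A ++ c :: B).eraseIdx A.length = A ++ B := by
  induction A with
  | nil => simp [List.eraseIdx]
  | cons a t ih => simp [List.eraseIdx, ih]

lemma nodup_mid (A B : List ℕ) (c : ℕ) (h : (A ++ c :: B).Nodup) : (c :: (A ++ B)).Nodup :=
  (List.perm_middle.nodup_iff).mp h

lemma getD_mem (l : List ℕ) (q : ℕ) (h : q < l.length) : l.getD q 0 ∈ l := by
  rw [List.getD_eq_getElem l 0 h]; exact List.getElem_mem ..

lemma getD_dropLast (l : List ℕ) (q : ℕ) (h : q + 1 < l.length) :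
    l.dropLast.getD q 0 = l.getD q 0 := by
  have h1 : q < l.dropLast.length := by simp; omega
  have h2 : q < l.length := by omega
  rw [List.getD_eq_getElem _ 0 h1, List.getD_eq_getElem _ 0 h2]
  exact List.getElem_dropLast h1

lemma getD_drop (l : List ℕ) (k q : ℕ) (h : k + q < l.length) :
    (l.drop k).getD q 0 = l.getD (k + q) 0 := by
  have h1 : q < (l.drop k).length := by simp; omega
  rw [List.getD_eq_getElem _ 0 h1, List.getD_eq_getElem _ 0 h]
  exact List.getElem_drop

lemma getD_take (l : List ℕ) (n q : ℕ) (h1 : q < n) (h2 : q < l.length) :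
    (l.take n).getD q 0 = l.getD q 0 := by
  have h3 : q < (l.take n).length := by simp; omega
  rw [List.getD_eq_getElem _ 0 h3, List.getD_eq_getElem _ 0 h2]
  exact List.getElem_take

/-- injectivity of getD on a nodup list -/
lemma getD_inj (l : List ℕ) (hl : l.Nodup) {i j : ℕ} (hi : i < l.length) (hj : j < l.length)
    (h : l.getD i 0 = l.getD j 0) : i = j := by
  rw [List.getD_eq_getElem _ 0 hi, List.getD_eq_getElem _ 0 hj] at h
  exact (List.Nodup.getElem_inj_iff hl).mp h

/-- a nodup list contained in another list is no longer -/
lemma nodup_subset_length {l₁ l₂ : List ℕ} (h : l₁.Nodup) (hs : l₁ ⊆ l₂) :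
    l₁.length ≤ l₂.length :=
  (List.subperm_of_subset h hs).length_le

lemma mem_of_subset_of_length {l₁ l₂ : List ℕ} (h₁ : l₁.Nodup) (hs : l₁ ⊆ l₂)
    (hl : l₂.length ≤ l₁.length) {x : ℕ} (hx : x ∈ l₂) : x ∈ l₁ :=
  (((List.subperm_of_subset h₁ hs).perm_of_length_le hl).mem_iff).mpr hx

/-- generic walk construction from an invariant -/
lemma exists_walk_inv {V : Type*} (A : V → V → Prop) (P : ℕ → V → Prop) :
    ∀ (n : ℕ) (u : V), P 0 u → (∀ i x, i < n → P i x → ∃ y, A x y ∧ P (i+1) y) →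
      ∃ z w, IsWalk A u z n w ∧ P n z := by
  intro n
  induction n with
  | zero =>
    intro u h0 _
    exact ⟨u, fun _ => u, ⟨rfl, rfl, fun i hi => absurd hi (by omega)⟩, h0⟩
  | succ n ih =>
    intro u h0 hstep
    obtain ⟨z, w, ⟨hw0, hwn, hws⟩, hz⟩ := ih u h0 (fun i x hi => hstep i x (by omega))
    obtain ⟨y, hy, hPy⟩ := hstep n z (by omega) hz
    refine ⟨y, fun i => if i = n+1 then y else w i, ⟨?_, ?_, ?_⟩, hPy⟩
    · simp [hw0]
    · simp
    · intro i hi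
      rcases Nat.lt_or_ge i n with h | h
      · simpa [Nat.ne_of_lt (by omega : i < n + 1), Nat.ne_of_lt (by omega : i + 1 < n + 1), Nat.ne_of_lt h]
          using hws i h
      · have : i = n := by omega
        subst this
        simpa [Nat.ne_of_lt (by omega : i < i + 1), hwn] using hy

/-- concatenation of walks -/
lemma walk_comp {V : Type*} {A : V → V → Prop} {u z v : V} {a b : ℕ} {w₁ w₂ : ℕ → V}
    (h₁ : IsWalk A u z a w₁) (h₂ : IsWalk A z v b w₂) : ∃ w, IsWalk A u v (a + b) w := by
  obtain ⟨h10, h1n, h1s⟩ := h₁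
  obtain ⟨h20, h2n, h2s⟩ := h₂
  refine ⟨fun i => if i < a then w₁ i else w₂ (i - a), ⟨?_, ?_, ?_⟩⟩
  · rcases Nat.eq_zero_or_pos a with h | h
    · subst h
      simp only [Nat.lt_irrefl, if_neg (by omega : ¬ (0:ℕ) < 0)]
      rw [Nat.sub_zero, h20, ← h1n]
      exact h10.symm ▸ rfl
    · simpa [h] using h10
  · have : ¬ (a + b < a) := by omega
    simp [this, h2n]
  · intro i hi
    rcases Nat.lt_or_ge (i+1) a with h | h
    · have : i < a := by omega
      simpa [h, this] using h1s i this
    · rcases Nat.lt_or_ge i a with h' | h'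
      · have ha : i + 1 = a := by omega
        have : w₂ (i + 1 - a) = z := by simp [ha, h20]
        simp only [h', if_pos, if_neg (by omega : ¬ i + 1 < a)]
        rw [show i + 1 - a = 0 by omega, h20, ← h1n, ← ha]
        exact h1s i (by omega)
      · simp only [if_neg (by omega : ¬ i < a), if_neg (by omega : ¬ i + 1 < a)]
        have := h2s (i - a) (by omega)
        rwa [show i - a + 1 = i + 1 - a by omega] at this


variable {Δ D r : ℕ}




lemma isVtx_rot {X A B : List ℕ} {c : ℕ} (hX : IsVtx Δ D X) (hsh : X = A ++ c :: B) :
    IsVtx Δ D (c :: (A ++ B)) := by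
  obtain ⟨hlen, hnd, halph⟩ := hX
  subst hsh
  refine ⟨by simp at hlen ⊢; omega, nodup_mid A B c hnd, ?_⟩
  intro x hx
  apply halph
  simp at hx ⊢
  tauto

lemma adjR_rot {X A B : List ℕ} {c : ℕ} (hX : IsVtx Δ D X) (hsh : X = A ++ c :: B)
    (hj : r + 1 ≤ A.length) : adjR Δ D r X (c :: (A ++ B)) := by
  have hjD : A.length < D := by
    have := hX.1
    subst hsh
    simp at this
    omega
  refine ⟨hX, isVtx_rot hX hsh, Or.inl ⟨A.length, hj, hjD, ?_⟩⟩
  rw [hsh, mid_getD, mid_eraseIdx]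

lemma isVtx_shift {X : List ℕ} {c : ℕ} (hX : IsVtx Δ D X) (hD : 0 < D) (hc : c ∉ X)
    (h1 : 1 ≤ c) (h2 : c ≤ Δ + 1) : IsVtx Δ D (c :: X.dropLast) := by
  obtain ⟨hlen, hnd, halph⟩ := hX
  refine ⟨by simp [hlen]; omega, ?_, ?_⟩
  · exact List.Nodup.cons (fun hmem => hc (List.dropLast_subset X hmem))
      (hnd.sublist (List.dropLast_sublist X))
  · intro x hx
    rcases List.mem_cons.mp hx with h | h
    · exact h ▸ ⟨h1, h2⟩
    · exact halph x (List.dropLast_subset X h)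

lemma adjR_shift {X : List ℕ} {c : ℕ} (hX : IsVtx Δ D X) (hD : 0 < D) (hc : c ∉ X)
    (h1 : 1 ≤ c) (h2 : c ≤ Δ + 1) : adjR Δ D r X (c :: X.dropLast) :=
  ⟨hX, isVtx_shift hX hD hc h1 h2, Or.inr ⟨c, hc, rfl⟩⟩

/-! ### Plan A : `u₀ ≠ v_{D-1}` -/

/-- Phase 1 invariant for plan A. -/
def InvA1 (Δ D r : ℕ) (u v : List ℕ) (i : ℕ) (Y : List ℕ) : Prop :=
  ∃ P T, Y = P ++ u.getD 0 0 :: T ∧ P.length = i ∧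
    (∀ x ∈ P, x ∉ v.drop (D - 1 - r)) ∧ IsVtx Δ D Y

/-- Phase 2 invariant for plan A. -/
def InvA2 (Δ D r : ℕ) (v : List ℕ) (t : ℕ) (Y : List ℕ) : Prop :=
  ∃ R, Y = v.drop (D - t) ++ R ∧ IsVtx Δ D Y ∧
    ∀ s q, s ≤ r → q < R.length → R.getD q 0 = v.getD (D - 1 - s) 0 → r + 1 ≤ s + q

lemma planA_phase1_step (hD : 2 * r + 3 ≤ D) (u v : List ℕ) (hv : IsVtx Δ D v)
    {i : ℕ} (hi : i < r) {Y : List ℕ} (h : InvA1 Δ D r u v i Y) :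
    ∃ Y', adjR Δ D r Y Y' ∧ InvA1 Δ D r u v (i + 1) Y' := by
  obtain ⟨P, T, hsh, hPlen, hPF, hYv⟩ := h
  have hYlen : Y.length = D := hYv.1
  have hTlen : T.length = D - 1 - i := by
    rw [hsh] at hYlen; simp at hYlen; omega
  have hvlen : v.length = D := hv.1
  have hFlen : (v.drop (D - 1 - r)).length = r + 1 := by simp [hvlen]; omega
  -- counting: some element of T.drop (r - i) avoids F
  have hex : ∃ x ∈ T.drop (r - i), x ∉ v.drop (D - 1 - r) := by
    by_contra hcon
    push_neg at hcon
    have hsub : T.drop (r - i) ⊆ v.drop (D - 1 - r) := fun x hx => hcon x hx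
    have hnd : (T.drop (r - i)).Nodup := by
      have : T.Nodup := by
        have := hYv.2.1
        rw [hsh] at this
        exact ((List.nodup_append.mp this).2.1).of_cons
      exact this.sublist (List.drop_sublist _ _)
    have hle := nodup_subset_length hnd hsub
    rw [hFlen] at hle
    simp [hTlen] at hle
    omega
  obtain ⟨x, hxS, hxF⟩ := hex
  obtain ⟨S₁, S₂, hS⟩ := List.append_of_mem hxS
  have hTsplit : T = T.take (r - i) ++ (S₁ ++ x :: S₂) := by
    rw [← hS, List.take_append_drop]
  set A := P ++ u.getD 0 0 :: (T.take (r - i) ++ S₁) with hA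
  have hshape : Y = A ++ x :: S₂ := by
    rw [hsh, hTsplit, hA]; simp
  have hAlen : r + 1 ≤ A.length := by
    have htake : (T.take (r - i)).length = r - i := by
      simp [hTlen]; omega
    simp [hA, hPlen, htake]
    omega
  refine ⟨x :: (A ++ S₂), adjR_rot hYv hshape hAlen, ?_⟩
  refine ⟨x :: P, T.take (r - i) ++ (S₁ ++ S₂), ?_, by simp [hPlen], ?_, isVtx_rot hYv hshape⟩
  · simp [hA]
  · intro y hy
    rcases List.mem_cons.mp hy with h | h
    · exact h ▸ hxF
    · exact hPF y h

lemma planA_handoff (hD : 2 * r + 3 ≤ D) (u v : List ℕ) (hv : IsVtx Δ D v)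
    (hne : u.getD 0 0 ≠ v.getD (D - 1) 0) {Z : List ℕ} (h : InvA1 Δ D r u v r Z) :
    InvA2 Δ D r v 0 Z := by
  obtain ⟨P, T, hsh, hPlen, hPF, hYv⟩ := h
  have hvlen : v.length = D := hv.1
  have hdropD : v.drop (D - 0) = [] := by
    rw [Nat.sub_zero, ← hvlen]
    exact List.drop_length
  refine ⟨Z, by rw [hdropD, List.nil_append], hYv, ?_⟩
  intro s q hs hq hget
  by_contra hcon
  push_neg at hcon
  have hqr : q ≤ r := by omega
  have hmemF : v.getD (D - 1 - s) 0 ∈ v.drop (D - 1 - r) := by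
    have h1 : (D - 1 - r) + (r - s) < v.length := by omega
    have := getD_drop v (D - 1 - r) (r - s) h1
    have he : D - 1 - r + (r - s) = D - 1 - s := by omega
    rw [he] at this
    rw [← this]
    exact getD_mem _ _ (by simp [hvlen]; omega)
  rcases Nat.lt_or_ge q r with hql | hqe
  · -- q < r : the letter is in P
    have : Z.getD q 0 = P.getD q 0 := by
      rw [hsh]
      exact List.getD_append _ _ _ _ (by omega)
    have hmemP : v.getD (D - 1 - s) 0 ∈ P := by
      rw [← hget, this]
      exact getD_mem _ _ (by omega)
    exact hPF _ hmemP hmemF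
  · -- q = r : the letter is u₀
    have hqr' : q = r := by omega
    have : Z.getD q 0 = u.getD 0 0 := by
      rw [hsh, hqr', ← hPlen]
      exact mid_getD P T _
    rw [this] at hget
    have hs0 : s = 0 := by omega
    rw [hs0] at hget
    exact hne hget

lemma planA_phase2_step (hD : 2 * r + 3 ≤ D) (v : List ℕ) (hv : IsVtx Δ D v)
    {t : ℕ} (ht : t < D) {Y : List ℕ} (h : InvA2 Δ D r v t Y) :
    ∃ Y', adjR Δ D r Y Y' ∧ InvA2 Δ D r v (t + 1) Y' := by
  obtain ⟨R, hsh, hYv, hpos⟩ := h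
  have hvlen : v.length = D := hv.1
  have hvnd : v.Nodup := hv.2.1
  have hYlen : Y.length = D := hYv.1
  have hClen : (v.drop (D - t)).length = t := by
    simp [hvlen]; omega
  have hRlen : R.length = D - t := by
    rw [hsh] at hYlen; simp [hClen] at hYlen ⊢
    omega
  set c := v.getD (D - 1 - t) 0 with hc_def
  have hidx : D - 1 - t < v.length := by omega
  have hcC : c :: v.drop (D - t) = v.drop (D - (t + 1)) := by
    have h1 : D - (t + 1) < v.length := by omega
    rw [List.drop_eq_getElem_cons h1, ← List.getD_eq_getElem v 0 h1]
    have e1 : D - (t + 1) = D - 1 - t := by omega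
    have e2 : D - (t + 1) + 1 = D - t := by omega
    rw [e2, e1]
  have hcnC : c ∉ v.drop (D - t) := by
    intro hmem
    obtain ⟨qc, hqc, hgetc⟩ := List.getElem_of_mem hmem
    have hqc' : qc < (v.drop (D - t)).length := hqc
    have h2 : (D - t) + qc < v.length := by simp at hqc'; omega
    have h3 : (v.drop (D - t)).getD qc 0 = v.getD ((D - t) + qc) 0 := getD_drop v _ _ h2
    rw [List.getD_eq_getElem _ 0 hqc', hgetc] at h3
    have h4 : v.getD ((D - t) + qc) 0 = v.getD (D - 1 - t) 0 := by rw [← h3, hc_def]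
    have := getD_inj v hvnd (by omega : (D - t) + qc < v.length) (by omega) h4
    omega
  by_cases hc : c ∈ Y
  · -- rotation step
    have hcR : c ∈ R := by
      rcases List.mem_append.mp (hsh ▸ hc) with h | h
      · exact absurd h hcnC
      · exact h
    obtain ⟨R₁, R₂, hR⟩ := List.append_of_mem hcR
    have hR1len : R₁.length < R.length := by rw [hR]; simp only [List.length_append, List.length_cons]; omega
    have hgetR : R.getD R₁.length 0 = c := by rw [hR]; exact mid_getD ..
    have hjge : r + 1 ≤ t + R₁.length := by
      rcases Nat.lt_or_ge r t with h' | h'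
      · omega
      · exact hpos t R₁.length (by omega) hR1len hgetR
    have hshape : Y = (v.drop (D - t) ++ R₁) ++ c :: R₂ := by
      rw [hsh, hR]; simp
    have hAlen : r + 1 ≤ (v.drop (D - t) ++ R₁).length := by
      simp [hClen]; omega
    refine ⟨_, adjR_rot hYv hshape hAlen, ?_⟩
    have hYv' : IsVtx Δ D (c :: (v.drop (D - t) ++ R₁ ++ R₂)) := isVtx_rot hYv hshape
    have hsh' : c :: (v.drop (D - t) ++ R₁ ++ R₂) = v.drop (D - (t + 1)) ++ (R₁ ++ R₂) := by
      rw [← hcC]; simp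
    refine ⟨R₁ ++ R₂, hsh', hsh' ▸ hYv', ?_⟩
    intro s q hs hq hget
    rcases Nat.lt_or_ge q R₁.length with hq1 | hq1
    · -- index unchanged
      have : R.getD q 0 = (R₁ ++ R₂).getD q 0 := by
        rw [hR, List.getD_append _ _ _ _ hq1, List.getD_append _ _ _ _ hq1]
      exact hpos s q hs (by omega) (this ▸ hget)
    · -- index shifted by one
      rcases Nat.lt_or_ge t s with hst | hst
      · -- s ≥ t+1 : arithmetic
        omega
      · -- s ≤ t : contradiction with nodup
        exfalso
        have hnd' : (v.drop (D - (t + 1)) ++ (R₁ ++ R₂)).Nodup := by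
          rw [← hsh']; exact hYv'.2.1
        have hmemC : v.getD (D - 1 - s) 0 ∈ v.drop (D - (t + 1)) := by
          have h1 : (D - (t + 1)) + (t - s) < v.length := by omega
          have := getD_drop v (D - (t + 1)) (t - s) h1
          have he : D - (t + 1) + (t - s) = D - 1 - s := by omega
          rw [he] at this
          rw [← this]
          exact getD_mem _ _ (by simp [hvlen]; omega)
        have hmemR : v.getD (D - 1 - s) 0 ∈ R₁ ++ R₂ := by
          rw [← hget]
          exact getD_mem _ _ hq
        exact (List.disjoint_of_nodup_append hnd') hmemC hmemR
  · -- shift step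
    have hcmem : c ∈ v := getD_mem v _ hidx
    have hR0 : R ≠ [] := by
      intro h0
      rw [h0] at hRlen
      simp at hRlen
      omega
    have harc := adjR_shift (r := r) hYv (by omega) hc (hv.2.2 c hcmem).1 (hv.2.2 c hcmem).2
    refine ⟨_, harc, ?_⟩
    have hdl : Y.dropLast = v.drop (D - t) ++ R.dropLast := by
      rw [hsh]; exact List.dropLast_append_of_ne_nil hR0
    have hsh' : c :: Y.dropLast = v.drop (D - (t + 1)) ++ R.dropLast := by
      rw [hdl, ← hcC]; simp
    refine ⟨R.dropLast, hsh', hsh' ▸ (isVtx_shift hYv (by omega) hc (hv.2.2 c hcmem).1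
      (hv.2.2 c hcmem).2), ?_⟩
    intro s q hs hq hget
    have hq' : q + 1 < R.length := by
      have : R.dropLast.length = R.length - 1 := by simp
      omega
    exact hpos s q hs (by omega) ((getD_dropLast R q hq') ▸ hget)

lemma planA_end (v : List ℕ) (hv : IsVtx Δ D v) {Y : List ℕ} (h : InvA2 Δ D r v D Y) :
    Y = v := by
  obtain ⟨R, hsh, hYv, _⟩ := h
  have hvlen : v.length = D := hv.1
  have : v.drop (D - D) = v := by simp
  rw [this] at hsh
  have hR0 : R.length = 0 := by
    have h5 := hYv.1
    rw [hsh, List.length_append, hvlen] at h5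
    omega
  rw [List.length_eq_zero_iff] at hR0
  rw [hsh, hR0, List.append_nil]

lemma planA (hD : 2 * r + 3 ≤ D) (u v : List ℕ) (hu : IsVtx Δ D u) (hv : IsVtx Δ D v)
    (hne : u.getD 0 0 ≠ v.getD (D - 1) 0) : ∃ w, IsWalk (adjR Δ D r) u v (D + r) w := by
  have hbase : InvA1 Δ D r u v 0 u := by
    refine ⟨[], u.tail, ?_, rfl, by simp, hu⟩
    simpa using head_decomp u (by rw [hu.1]; omega)
  obtain ⟨Z, w₁, hw₁, hZ⟩ := exists_walk_inv (adjR Δ D r) (InvA1 Δ D r u v) r u hbase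
    (fun i x hi hx => planA_phase1_step hD u v hv hi hx)
  have hZ2 : InvA2 Δ D r v 0 Z := planA_handoff hD u v hv hne hZ
  obtain ⟨Z', w₂, hw₂, hZ'⟩ := exists_walk_inv (adjR Δ D r) (InvA2 Δ D r v) D Z hZ2
    (fun t x htd hx => planA_phase2_step hD v hv htd hx)
  rw [planA_end v hv hZ'] at hw₂
  obtain ⟨w, hw⟩ := walk_comp hw₁ hw₂
  rw [Nat.add_comm r D] at hw
  exact ⟨w, hw⟩







/-! ### Plan B : `u₀ = v_{D-1}` -/

/-- chain bound for strictly sorted lists -/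
lemma sorted_getD_ge : ∀ (l : List ℕ) (m : ℕ), l.Pairwise (· < ·) → (∀ x ∈ l, m ≤ x) →
    ∀ i, i < l.length → m + i ≤ l.getD i 0 := by
  intro l
  induction l with
  | nil => intro m _ _ i hi; simp at hi
  | cons a t ih =>
    intro m hp hm i hi
    cases i with
    | zero => simpa using hm a (by simp)
    | succ i =>
      rw [List.getD_cons_succ]
      have h1 : t.Pairwise (· < ·) := hp.of_cons
      have h2 : ∀ x ∈ t, m + 1 ≤ x := by
        intro x hx
        have h3 := (List.pairwise_cons.mp hp).1 x hx
        have h4 := hm a (by simp)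
        omega
      have := ih (m+1) h1 h2 i (by simp at hi; omega)
      omega

/-- length bound for strictly sorted lists of elements in `[2, t]` -/
lemma sorted_length_le {l : List ℕ} (hp : l.Pairwise (· < ·)) (h2 : ∀ x ∈ l, 2 ≤ x)
    {t : ℕ} (ht : ∀ x ∈ l, x ≤ t) : l.length ≤ t := by
  rcases l.eq_nil_or_concat with h | ⟨l', b, h⟩
  · simp [h]
  · have hlen : l'.length < l.length := by rw [h]; simp
    have hb : l.getD l'.length 0 = b := by rw [h, List.concat_eq_append]; exact mid_getD l' [] b
    have := sorted_getD_ge l 2 hp h2 l'.length hlen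
    have hbl : b ∈ l := by rw [h]; simp
    have := ht b hbl
    rw [hb] at *
    rw [h]
    simp
    omega

/-- Phase-1 step for plan B. -/
lemma planB_phase1_step (hD : 2 * r + 3 ≤ D) {u : List ℕ} {W T Y : List ℕ} {w : ℕ}
    (hY : IsVtx Δ D Y) (hsh : Y = W ++ u.getD 0 0 :: T) (hi : W.length ≤ r)
    (hpos : ∀ q, q < T.length → W.length + 1 + q ≤ r → T.getD q 0 ∈ u.take (r + 1))
    (hw_nW : w ∉ W) (hw_u0 : w ≠ u.getD 0 0)
    (hw_low : w ∉ u.take (r + 1)) (hw1 : 1 ≤ w) (hw2 : w ≤ Δ + 1) :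
    ∃ T', adjR Δ D r Y ((w :: W) ++ u.getD 0 0 :: T') ∧
      ∀ q, q < T'.length → (W.length + 1) + 1 + q ≤ r → T'.getD q 0 ∈ u.take (r + 1) := by
  have hYlen : Y.length = D := hY.1
  have hTlen : T.length = D - W.length - 1 := by
    rw [hsh] at hYlen; simp at hYlen; omega
  by_cases hw : w ∈ Y
  · -- rotation
    have hwT : w ∈ T := by
      rcases List.mem_append.mp (hsh ▸ hw) with h | h
      · exact absurd h hw_nW
      · rcases List.mem_cons.mp h with h | h
        · exact absurd h hw_u0
        · exact h
    obtain ⟨T₁, T₂, hT⟩ := List.append_of_mem hwT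
    have hgT : T.getD T₁.length 0 = w := by rw [hT]; exact mid_getD ..
    have hT1len : T₁.length < T.length := by rw [hT]; simp
    have hq0 : ¬ (W.length + 1 + T₁.length ≤ r) := by
      intro hle
      exact hw_low (hgT ▸ hpos T₁.length hT1len hle)
    have hshape : Y = (W ++ u.getD 0 0 :: T₁) ++ w :: T₂ := by
      rw [hsh, hT]; simp
    have hAlen : r + 1 ≤ (W ++ u.getD 0 0 :: T₁).length := by simp; omega
    have harc := adjR_rot hY hshape hAlen
    have hlist : w :: ((W ++ u.getD 0 0 :: T₁) ++ T₂) = (w :: W) ++ u.getD 0 0 :: (T₁ ++ T₂) := by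
      simp
    refine ⟨T₁ ++ T₂, hlist ▸ harc, ?_⟩
    intro q hq hle
    rcases Nat.lt_or_ge q T₁.length with h1 | h1
    · have he : (T₁ ++ T₂).getD q 0 = T.getD q 0 := by
        rw [hT, List.getD_append _ _ _ _ h1, List.getD_append _ _ _ _ h1]
      rw [he]
      exact hpos q (by omega) (by omega)
    · have he : (T₁ ++ T₂).getD q 0 = T.getD (q + 1) 0 := by
        rw [hT, List.getD_append_right _ _ _ _ h1,
          List.getD_append_right _ _ _ _ (by omega : T₁.length ≤ q + 1)]
        have : q + 1 - T₁.length = (q - T₁.length) + 1 := by omega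
        rw [this, List.getD_cons_succ]
      rw [he]
      have hq' : q + 1 < T.length := by
        rw [hT]; simp at hq ⊢; omega
      exact hpos (q + 1) hq' (by omega)
  · -- shift
    have hT0 : T ≠ [] := by
      intro h0
      rw [h0] at hTlen
      simp at hTlen
      omega
    have harc := adjR_shift (r := r) hY (by omega) hw hw1 hw2
    have hdl : Y.dropLast = W ++ u.getD 0 0 :: T.dropLast := by
      have : Y = (W ++ [u.getD 0 0]) ++ T := by rw [hsh]; simp
      rw [this, List.dropLast_append_of_ne_nil hT0]
      simp
    have hlist : w :: Y.dropLast = (w :: W) ++ u.getD 0 0 :: T.dropLast := by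
      rw [hdl]; simp
    refine ⟨T.dropLast, hlist ▸ harc, ?_⟩
    intro q hq hle
    have hq' : q + 1 < T.length := by simp at hq; omega
    rw [getD_dropLast T q hq']
    exact hpos q (by omega) (by omega)







/-- Phase-2 invariant for plan B. -/
def InvB2 (Δ D r : ℕ) (v : List ℕ) (u0 : ℕ) (TS : List ℕ) (t : ℕ) (Y : List ℕ) : Prop :=
  ∃ TS₁ TS₂ T, TS = TS₁ ++ TS₂ ∧ (∀ τ ∈ TS₁, τ ≤ t) ∧ (∀ τ ∈ TS₂, t < τ) ∧
    Y = ((v.take (D - 1)).drop (D - 1 - t)) ++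
      (TS₂.reverse.map (fun τ => v.getD (D - 1 - τ) 0)) ++ u0 :: T ∧
    IsVtx Δ D Y

lemma planB_phase2_step (hD : 2 * r + 3 ≤ D) (v : List ℕ) (hv : IsVtx Δ D v) (u0 : ℕ)
    (hu0 : u0 = v.getD (D - 1) 0) (TS : List ℕ) (hTSp : TS.Pairwise (· < ·))
    (hTSlen : TS.length = r + 1) (hTSmem : ∀ τ ∈ TS, 2 ≤ τ ∧ τ ≤ 2 * r + 2)
    {t : ℕ} (ht : t < D - 1) {Y : List ℕ} (h : InvB2 Δ D r v u0 TS t Y) :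
    ∃ Y', adjR Δ D r Y Y' ∧ InvB2 Δ D r v u0 TS (t + 1) Y' := by
  classical
  obtain ⟨TS₁, TS₂, T, hTS, hTS1, hTS2, hsh, hYv⟩ := h
  have hvlen : v.length = D := hv.1
  have hvnd : v.Nodup := hv.2.1
  have hLlen : (v.take (D - 1)).length = D - 1 := by simp [hvlen]
  have hCtlen : ((v.take (D - 1)).drop (D - 1 - t)).length = t := by simp [hLlen]; omega
  have hMlen : (TS₂.reverse.map (fun τ => v.getD (D - 1 - τ) 0)).length = TS₂.length := by simp
  have hYlen : Y.length = D := hYv.1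
  have hTlen : t + TS₂.length + 1 + T.length = D := by
    have h9 := hYv.1
    rw [hsh] at h9
    simp only [List.length_append, List.length_cons, hCtlen, hMlen] at h9
    omega
  have hTS12len : TS₁.length + TS₂.length = r + 1 := by
    rw [hTS] at hTSlen; simp at hTSlen; omega
  have hTS2le : ∀ τ ∈ TS₂, τ ≤ 2 * r + 2 := fun τ hτ =>
    (hTSmem τ (by rw [hTS]; exact List.mem_append_right _ hτ)).2
  have hctsucc : v.getD (D - 2 - t) 0 :: (v.take (D - 1)).drop (D - 1 - t) =
      (v.take (D - 1)).drop (D - 1 - (t + 1)) := by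
    have h1 : D - 1 - (t + 1) < (v.take (D - 1)).length := by omega
    rw [List.drop_eq_getElem_cons h1, ← List.getD_eq_getElem _ 0 h1]
    have e1 : D - 1 - (t + 1) = D - 2 - t := by omega
    have e2 : D - 1 - (t + 1) + 1 = D - 1 - t := by omega
    rw [e2, e1, getD_take v (D - 1) (D - 2 - t) (by omega) (by omega)]
  have hcCt : v.getD (D - 2 - t) 0 ∉ (v.take (D - 1)).drop (D - 1 - t) := by
    intro hmem
    obtain ⟨i, hi, hei⟩ := List.getElem_of_mem hmem
    have hi' : i < t := by rw [hCtlen] at hi; exact hi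
    have h2 : (D - 1 - t) + i < (v.take (D - 1)).length := by omega
    have h3 : ((v.take (D - 1)).drop (D - 1 - t)).getD i 0 =
        (v.take (D - 1)).getD ((D - 1 - t) + i) 0 := getD_drop _ _ _ h2
    rw [List.getD_eq_getElem _ 0 hi, hei,
      getD_take v (D - 1) _ (by omega) (by omega)] at h3
    have := getD_inj v hvnd (by omega : D - 2 - t < v.length)
      (by omega : (D - 1 - t) + i < v.length) h3
    omega
  have hcu0 : v.getD (D - 2 - t) 0 ≠ u0 := by
    rw [hu0]
    intro he
    have := getD_inj v hvnd (by omega : D - 2 - t < v.length) (by omega : D - 1 < v.length) he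
    omega
  by_cases hmem : t + 1 ∈ TS₂
  · -- deletion rotation: the letter written is the oldest live doomed copy
    obtain ⟨τ₀, TS₂', hTS₂⟩ : ∃ τ₀ TS₂', TS₂ = τ₀ :: TS₂' := by
      cases TS₂ with
      | nil => simp at hmem
      | cons a l => exact ⟨a, l, rfl⟩
    have hTS₂p : TS₂.Pairwise (· < ·) := hTSp.sublist (hTS ▸ List.sublist_append_right TS₁ TS₂)
    have hτ₀ : τ₀ = t + 1 := by
      rcases List.mem_cons.mp (hTS₂ ▸ hmem) with h | h
      · omega
      · exfalso
        have h1 := (List.pairwise_cons.mp (hTS₂ ▸ hTS₂p)).1 (t + 1) h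
        have h2 := hTS2 τ₀ (hTS₂ ▸ (by simp : τ₀ ∈ τ₀ :: TS₂'))
        omega
    have hfτ₀ : v.getD (D - 1 - τ₀) 0 = v.getD (D - 2 - t) 0 := by
      rw [hτ₀]
      have : D - 1 - (t + 1) = D - 2 - t := by omega
      rw [this]
    have hMsplit : TS₂.reverse.map (fun τ => v.getD (D - 1 - τ) 0) =
        TS₂'.reverse.map (fun τ => v.getD (D - 1 - τ) 0) ++ [v.getD (D - 2 - t) 0] := by
      rw [hTS₂, List.reverse_cons, List.map_append]
      simp only [List.map_cons, List.map_nil]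
      rw [hfτ₀]
    have hshape : Y = ((v.take (D - 1)).drop (D - 1 - t) ++
        TS₂'.reverse.map (fun τ => v.getD (D - 1 - τ) 0)) ++
        v.getD (D - 2 - t) 0 :: (u0 :: T) := by
      rw [hsh, hMsplit]; simp
    have hTS1le : TS₁.length ≤ t - 1 ∧ 1 ≤ t := by
      have hg : TS.getD TS₁.length 0 = τ₀ := by
        rw [hTS, hTS₂]; exact mid_getD ..
      have hlt : TS₁.length < TS.length := by
        rw [hTS, hTS₂]; simp
      have := sorted_getD_ge TS 2 hTSp (fun x hx => (hTSmem x hx).1) TS₁.length hlt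
      rw [hg] at this
      omega
    have hAlen : r + 1 ≤ ((v.take (D - 1)).drop (D - 1 - t) ++
        TS₂'.reverse.map (fun τ => v.getD (D - 1 - τ) 0)).length := by
      have h5 : TS₂.length = TS₂'.length + 1 := by rw [hTS₂]; simp
      simp only [List.length_append, hCtlen, List.length_map, List.length_reverse]
      omega
    refine ⟨_, adjR_rot hYv hshape hAlen, ?_⟩
    refine ⟨TS₁ ++ [τ₀], TS₂', T, by rw [hTS, hTS₂]; simp, ?_, ?_, ?_, ?_⟩
    · intro τ hτ
      rcases List.mem_append.mp hτ with h | h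
      · have := hTS1 τ h; omega
      · simp at h; omega
    · intro τ hτ
      have := (List.pairwise_cons.mp (hTS₂ ▸ hTS₂p)).1 τ hτ
      omega
    · rw [← hctsucc]
      simp
    · exact isVtx_rot hYv hshape
  · -- no deletion at this step
    have hTS2' : ∀ τ ∈ TS₂, t + 1 < τ := by
      intro τ hτ
      have h1 := hTS2 τ hτ
      rcases Nat.eq_or_lt_of_le (by omega : t + 1 ≤ τ) with h | h
      · exact absurd (h ▸ hτ) hmem
      · exact h
    have hcM : v.getD (D - 2 - t) 0 ∉ TS₂.reverse.map (fun τ => v.getD (D - 1 - τ) 0) := by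
      intro hmem'
      obtain ⟨τ, hτ, hfe⟩ := List.mem_map.mp hmem'
      rw [List.mem_reverse] at hτ
      have hτb := hTS2' τ hτ
      have hτb2 := hTS2le τ hτ
      have := getD_inj v hvnd (by omega : D - 1 - τ < v.length)
        (by omega : D - 2 - t < v.length) hfe
      omega
    have hTS1len : TS₁.length ≤ t := by
      rcases Nat.eq_zero_or_pos TS₁.length with h | h
      · omega
      · have hp1 : TS₁.Pairwise (· < ·) := hTSp.sublist (hTS ▸ List.sublist_append_left TS₁ TS₂)
        have := sorted_length_le hp1
          (fun x hx => (hTSmem x (by rw [hTS]; exact List.mem_append_left _ hx)).1) hTS1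
        omega
    by_cases hcY : v.getD (D - 2 - t) 0 ∈ Y
    · -- rotation from the tail T
      have hcT : v.getD (D - 2 - t) 0 ∈ T := by
        rcases List.mem_append.mp (hsh ▸ hcY) with h | h
        · rcases List.mem_append.mp h with h' | h'
          · exact absurd h' hcCt
          · exact absurd h' hcM
        · rcases List.mem_cons.mp h with h' | h'
          · exact absurd h' hcu0
          · exact h'
      obtain ⟨T₁, T₂, hT⟩ := List.append_of_mem hcT
      have hshape : Y = ((v.take (D - 1)).drop (D - 1 - t) ++
          TS₂.reverse.map (fun τ => v.getD (D - 1 - τ) 0) ++ u0 :: T₁) ++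
          v.getD (D - 2 - t) 0 :: T₂ := by
        rw [hsh, hT]; simp
      have hAlen : r + 1 ≤ ((v.take (D - 1)).drop (D - 1 - t) ++
          TS₂.reverse.map (fun τ => v.getD (D - 1 - τ) 0) ++ u0 :: T₁).length := by
        simp only [List.length_append, hCtlen, List.length_map, List.length_reverse,
          List.length_cons]
        omega
      refine ⟨_, adjR_rot hYv hshape hAlen, ?_⟩
      refine ⟨TS₁, TS₂, T₁ ++ T₂, hTS, fun τ hτ => by have := hTS1 τ hτ; omega, hTS2', ?_, ?_⟩
      · rw [← hctsucc]
        simp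
      · exact isVtx_rot hYv hshape
    · -- shift
      have hcv : v.getD (D - 2 - t) 0 ∈ v := getD_mem v _ (by omega)
      have hT0 : T ≠ [] := by
        intro h0
        have hMfull : TS₂.length = D - 1 - t := by
          rw [h0] at hTlen
          simp at hTlen
          omega
        have hL'len : (v.take (D - 1 - t)).length = D - 1 - t := by simp [hvlen]; omega
        have hMsub : TS₂.reverse.map (fun τ => v.getD (D - 1 - τ) 0) ⊆ v.take (D - 1 - t) := by
          intro x hx
          obtain ⟨τ, hτ, hfe⟩ := List.mem_map.mp hx
          rw [List.mem_reverse] at hτ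
          have hτb := hTS2 τ hτ
          have hτb2 := hTS2le τ hτ
          have h7 : (v.take (D - 1 - t)).getD (D - 1 - τ) 0 = v.getD (D - 1 - τ) 0 :=
            getD_take v _ _ (by omega) (by omega)
          rw [← hfe, ← h7]
          exact getD_mem _ _ (by rw [hL'len]; omega)
        have hMnd : (TS₂.reverse.map (fun τ => v.getD (D - 1 - τ) 0)).Nodup := by
          have hTS₂p : TS₂.Pairwise (· < ·) :=
            hTSp.sublist (hTS ▸ List.sublist_append_right TS₁ TS₂)
          have hnd2 : TS₂.reverse.Nodup :=
            List.nodup_reverse.mpr (hTS₂p.imp Nat.ne_of_lt)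
          refine List.Nodup.map_on ?_ hnd2
          intro x hx y hy hfe
          rw [List.mem_reverse] at hx hy
          have hx2 := hTS2le x hx
          have hy2 := hTS2le y hy
          have hx1 := hTS2 x hx
          have hy1 := hTS2 y hy
          have := getD_inj v hvnd (by omega : D - 1 - x < v.length)
            (by omega : D - 1 - y < v.length) hfe
          omega
        have hcL' : v.getD (D - 2 - t) 0 ∈ v.take (D - 1 - t) := by
          have h7 : (v.take (D - 1 - t)).getD (D - 2 - t) 0 = v.getD (D - 2 - t) 0 :=
            getD_take v _ _ (by omega) (by omega)
          rw [← h7]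
          exact getD_mem _ _ (by rw [hL'len]; omega)
        have hcM' := mem_of_subset_of_length hMnd hMsub
          (by simp only [List.length_map, List.length_reverse]; omega) hcL'
        exact hcY (by rw [hsh]; exact List.mem_append.mpr (Or.inl (List.mem_append.mpr (Or.inr hcM'))))
      have harc := adjR_shift (r := r) hYv (by omega) hcY (hv.2.2 _ hcv).1 (hv.2.2 _ hcv).2
      have hdl : Y.dropLast = (v.take (D - 1)).drop (D - 1 - t) ++
          TS₂.reverse.map (fun τ => v.getD (D - 1 - τ) 0) ++ u0 :: T.dropLast := by
        have hY' : Y = ((v.take (D - 1)).drop (D - 1 - t) ++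
            TS₂.reverse.map (fun τ => v.getD (D - 1 - τ) 0) ++ [u0]) ++ T := by
          rw [hsh]; simp
        rw [hY', List.dropLast_append_of_ne_nil hT0]
        simp
      have hlist : v.getD (D - 2 - t) 0 :: Y.dropLast =
          (v.take (D - 1)).drop (D - 1 - (t + 1)) ++
          TS₂.reverse.map (fun τ => v.getD (D - 1 - τ) 0) ++ u0 :: T.dropLast := by
        rw [hdl, ← hctsucc]; simp
      exact ⟨_, harc, TS₁, TS₂, T.dropLast, hTS,
        fun τ hτ => by have := hTS1 τ hτ; omega, hTS2', hlist,
        isVtx_shift hYv (by omega) hcY (hv.2.2 _ hcv).1 (hv.2.2 _ hcv).2⟩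







lemma planB_end (hD : 2 * r + 3 ≤ D) (v : List ℕ) (hv : IsVtx Δ D v) (u0 : ℕ)
    (hu0 : u0 = v.getD (D - 1) 0) (TS : List ℕ) (hTSmem : ∀ τ ∈ TS, 2 ≤ τ ∧ τ ≤ 2 * r + 2)
    {Y : List ℕ} (h : InvB2 Δ D r v u0 TS (D - 1) Y) : Y = v := by
  obtain ⟨TS₁, TS₂, T, hTS, hTS1, hTS2, hsh, hYv⟩ := h
  have hvlen : v.length = D := hv.1
  have hTS₂nil : TS₂ = [] := by
    rw [List.eq_nil_iff_forall_not_mem]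
    intro τ hτ
    have h1 := hTS2 τ hτ
    have h2 := (hTSmem τ (by rw [hTS]; exact List.mem_append_right _ hτ)).2
    omega
  have hdrop0 : (v.take (D - 1)).drop (D - 1 - (D - 1)) = v.take (D - 1) := by
    rw [Nat.sub_self, List.drop_zero]
  rw [hTS₂nil, hdrop0] at hsh
  simp only [List.reverse_nil, List.map_nil, List.append_nil] at hsh
  have hTnil : T = [] := by
    have h9 := hYv.1
    rw [hsh] at h9
    simp [hvlen] at h9
    rw [← List.length_eq_zero_iff]
    omega
  rw [hTnil] at hsh
  have hvsplit : v = v.take (D - 1) ++ [v.getD (D - 1) 0] := by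
    conv_lhs => rw [← List.take_append_drop (D - 1) v]
    congr 1
    have h1 : D - 1 < v.length := by omega
    rw [List.drop_eq_getElem_cons h1, ← List.getD_eq_getElem v 0 h1]
    congr 1
    exact List.drop_eq_nil_of_le (by omega)
  rw [hsh, hu0]
  exact hvsplit.symm

/-- existence of the list of write times for plan B -/
lemma exists_TS (hD : 2 * r + 3 ≤ D) (u v : List ℕ) (hu : IsVtx Δ D u) (hv : IsVtx Δ D v)
    (heq : u.getD 0 0 = v.getD (D - 1) 0) :
    ∃ TS : List ℕ, TS.Pairwise (· < ·) ∧ TS.length = r + 1 ∧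
      ∀ τ ∈ TS, (2 ≤ τ ∧ τ ≤ 2 * r + 2) ∧ v.getD (D - 1 - τ) 0 ∉ u.take (r + 1) := by
  classical
  have hulen : u.length = D := hu.1
  have hvlen : v.length = D := hv.1
  have hvnd : v.Nodup := hv.2.1
  set good : ℕ → Bool := fun τ => decide (v.getD (D - 1 - τ) 0 ∉ u.take (r + 1)) with hgood
  set base : List ℕ := List.range' 2 (2 * r + 1) with hbase
  have hbasep : base.Pairwise (· < ·) := by rw [hbase]; exact List.pairwise_lt_range' 1 (by omega)
  have hbasemem : ∀ τ ∈ base, 2 ≤ τ ∧ τ ≤ 2 * r + 2 := by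
    intro τ hτ
    rw [hbase, List.mem_range'_1] at hτ
    omega
  have hblen : (base.filter (fun τ => ! good τ)).length ≤ r := by
    set bl : List ℕ := base.filter (fun τ => ! good τ) with hbl
    have hblp : bl.Pairwise (· < ·) := hbasep.sublist (List.filter_sublist (l := base))
    have hblmem : ∀ τ ∈ bl, 2 ≤ τ ∧ τ ≤ 2 * r + 2 := fun τ hτ =>
      hbasemem τ (List.mem_of_mem_filter hτ)
    have hmapnd : (bl.map (fun τ => v.getD (D - 1 - τ) 0)).Nodup := by
      refine List.Nodup.map_on ?_ (hblp.imp Nat.ne_of_lt)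
      intro x hx y hy hfe
      have hx2 := hblmem x hx
      have hy2 := hblmem y hy
      have := getD_inj v hvnd (by omega : D - 1 - x < v.length)
        (by omega : D - 1 - y < v.length) hfe
      omega
    have htake : u.take (r + 1) = u.getD 0 0 :: (u.take (r + 1)).tail := by
      have h1 : (u.take (r + 1)).length = r + 1 := by simp [hulen]; omega
      have h2 := head_decomp (u.take (r + 1)) (by omega)
      rwa [getD_take u (r + 1) 0 (by omega) (by omega)] at h2
    have hmapsub : (bl.map (fun τ => v.getD (D - 1 - τ) 0)) ⊆ (u.take (r + 1)).tail := by
      intro x hx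
      obtain ⟨τ, hτ, hfe⟩ := List.mem_map.mp hx
      have hτ2 := hblmem τ hτ
      have hng : v.getD (D - 1 - τ) 0 ∈ u.take (r + 1) := by
        have := List.of_mem_filter hτ
        simp only [hgood, Bool.not_eq_true', decide_eq_false_iff_not, not_not] at this
        exact this
      have hne : v.getD (D - 1 - τ) 0 ≠ u.getD 0 0 := by
        rw [heq]
        intro he
        have := getD_inj v hvnd (by omega : D - 1 - τ < v.length)
          (by omega : D - 1 < v.length) he
        omega
      rw [← hfe]
      rw [htake] at hng
      rcases List.mem_cons.mp hng with h | h
      · exact absurd h hne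
      · exact h
    have htl : ((u.take (r + 1)).tail).length = r := by
      simp [hulen]
      omega
    have := nodup_subset_length hmapnd hmapsub
    rw [htl, List.length_map] at this
    exact this
  have hgoodlen : r + 1 ≤ (base.filter good).length := by
    have h1 := List.length_eq_length_filter_add (l := base) good
    have h2 : base.length = 2 * r + 1 := by simp [hbase]
    omega
  refine ⟨(base.filter good).take (r + 1), ?_, ?_, ?_⟩
  · exact (hbasep.sublist (List.filter_sublist (l := base))).sublist (List.take_sublist _ _)
  · simp only [List.length_take]
    omega
  · intro τ hτ
    have hτf : τ ∈ base.filter good := List.mem_of_mem_take hτ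
    refine ⟨hbasemem τ (List.mem_of_mem_filter hτf), ?_⟩
    have := List.of_mem_filter hτf
    simpa only [hgood, decide_eq_true_eq] using this







lemma planB (hD : 2 * r + 3 ≤ D) (u v : List ℕ) (hu : IsVtx Δ D u) (hv : IsVtx Δ D v)
    (heq : u.getD 0 0 = v.getD (D - 1) 0) : ∃ w, IsWalk (adjR Δ D r) u v (D + r) w := by
  classical
  obtain ⟨TS, hTSp, hTSlen, hTSmem⟩ := exists_TS hD u v hu hv heq
  have hulen : u.length = D := hu.1
  have hvlen : v.length = D := hv.1
  have hvnd : v.Nodup := hv.2.1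
  -- phase 1
  have hstep : ∀ i Y, i < r + 1 →
      (∃ T, Y = ((TS.take i).reverse.map (fun τ => v.getD (D - 1 - τ) 0)) ++ u.getD 0 0 :: T ∧
        IsVtx Δ D Y ∧ ∀ q, q < T.length → i + 1 + q ≤ r → T.getD q 0 ∈ u.take (r + 1)) →
      ∃ Y', adjR Δ D r Y Y' ∧
      (∃ T, Y' = ((TS.take (i+1)).reverse.map (fun τ => v.getD (D - 1 - τ) 0)) ++
          u.getD 0 0 :: T ∧
        IsVtx Δ D Y' ∧ ∀ q, q < T.length → (i+1) + 1 + q ≤ r → T.getD q 0 ∈ u.take (r + 1)) := by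
    intro i Y hir hP
    obtain ⟨T, hsh, hYv, hpos⟩ := hP
    have hilen : i < TS.length := by omega
    have hWlen : ((TS.take i).reverse.map (fun τ => v.getD (D - 1 - τ) 0)).length = i := by
      simp [hTSlen]
      omega
    have hτmem := hTSmem (TS.getD i 0) (getD_mem TS i hilen)
    have hw_nW : v.getD (D - 1 - TS.getD i 0) 0 ∉
        (TS.take i).reverse.map (fun τ => v.getD (D - 1 - τ) 0) := by
      intro hmem
      obtain ⟨τ, hτ, hfe⟩ := List.mem_map.mp hmem
      rw [List.mem_reverse] at hτ
      obtain ⟨j, hj, hje⟩ := List.getElem_of_mem hτ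
      have hj' : j < i := by
        have : (TS.take i).length = i := by simp [hTSlen]; omega
        omega
      have hje2 : τ = TS[j]'(by omega) := by rw [← hje]; exact List.getElem_take
      have hlt : TS[j]'(by omega) < TS[i]'hilen :=
        List.pairwise_iff_getElem.mp hTSp j i (by omega) hilen hj'
      have hτm := (hTSmem τ (List.mem_of_mem_take hτ)).1
      have hb1 := hτmem.1.1
      have hb2 := hτmem.1.2
      have hinj := getD_inj v hvnd (by have := hτm.1; omega : D - 1 - τ < v.length)
        (by omega : D - 1 - TS.getD i 0 < v.length) hfe
      have hgi : TS.getD i 0 = TS[i]'hilen := List.getD_eq_getElem TS 0 hilen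
      have hτm1 := hτm.1
      have hτm2 := hτm.2
      omega
    have hw_u0 : v.getD (D - 1 - TS.getD i 0) 0 ≠ u.getD 0 0 := by
      rw [heq]
      intro he
      have := getD_inj v hvnd (by omega : D - 1 - TS.getD i 0 < v.length)
        (by omega : D - 1 < v.length) he
      omega
    have hcv : v.getD (D - 1 - TS.getD i 0) 0 ∈ v := getD_mem v _ (by omega)
    have hb1 := hτmem.1.1
    have hb2 := hτmem.1.2
    have hposW : ∀ q, q < T.length →
        ((TS.take i).reverse.map (fun τ => v.getD (D - 1 - τ) 0)).length + 1 + q ≤ r →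
        T.getD q 0 ∈ u.take (r + 1) := by
      rw [hWlen]; exact hpos
    obtain ⟨T', harc, hpos'⟩ := planB_phase1_step hD hYv hsh (by rw [hWlen]; omega)
      hposW hw_nW hw_u0 hτmem.2 (hv.2.2 _ hcv).1 (hv.2.2 _ hcv).2
    have htake1 : (TS.take (i+1)).reverse.map (fun τ => v.getD (D - 1 - τ) 0) =
        v.getD (D - 1 - TS.getD i 0) 0 ::
          (TS.take i).reverse.map (fun τ => v.getD (D - 1 - τ) 0) := by
      have h1 : TS.take (i+1) = TS.take i ++ [TS[i]'hilen] := by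
        rw [← List.take_concat_get hilen, List.concat_eq_append]
      rw [h1, List.reverse_append, List.getD_eq_getElem TS 0 hilen]
      simp
    refine ⟨_, harc, T', ?_, harc.2.1, ?_⟩
    · rw [htake1]
    · rw [hWlen] at hpos'
      intro q hq hle
      exact hpos' q hq (by omega)
  obtain ⟨Z, w₁, hw₁, hZ⟩ := exists_walk_inv (adjR Δ D r)
    (fun i Y => ∃ T,
      Y = ((TS.take i).reverse.map (fun τ => v.getD (D - 1 - τ) 0)) ++ u.getD 0 0 :: T ∧
      IsVtx Δ D Y ∧ ∀ q, q < T.length → i + 1 + q ≤ r → T.getD q 0 ∈ u.take (r + 1))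
    (r + 1) u
    (by
      refine ⟨u.tail, by simpa using head_decomp u (by omega), hu, ?_⟩
      intro q hq hle
      have h1 : u.tail = u.drop 1 := List.drop_one.symm
      have h2 : 1 + q < u.length := by rw [h1] at hq; simp at hq; omega
      rw [h1, getD_drop u 1 q h2, ← getD_take u (r + 1) (1 + q) (by omega) (by omega)]
      exact getD_mem _ _ (by simp [hulen]; omega))
    hstep
  -- handoff
  have hZ2 : InvB2 Δ D r v (u.getD 0 0) TS 0 Z := by
    obtain ⟨T, hsh, hYv, _⟩ := hZ
    refine ⟨[], TS, T, by simp, by simp, fun τ hτ => by have := (hTSmem τ hτ).1; omega, ?_, hYv⟩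
    have h1 : (v.take (D - 1)).drop (D - 1 - 0) = [] :=
      List.drop_eq_nil_of_le (by simp [hvlen])
    rw [h1, List.nil_append]
    have h2 : TS.take (r + 1) = TS := by rw [← hTSlen]; exact List.take_length
    rw [h2] at hsh
    exact hsh
  -- phase 2
  obtain ⟨Z', w₂, hw₂, hZ'⟩ := exists_walk_inv (adjR Δ D r)
    (InvB2 Δ D r v (u.getD 0 0) TS) (D - 1) Z hZ2
    (fun t Y htd hY => planB_phase2_step hD v hv (u.getD 0 0) heq TS hTSp hTSlen
      (fun τ hτ => (hTSmem τ hτ).1) htd hY)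
  rw [planB_end hD v hv (u.getD 0 0) heq TS (fun τ hτ => (hTSmem τ hτ).1) hZ'] at hw₂
  obtain ⟨w, hw⟩ := walk_comp hw₁ hw₂
  rw [show (r + 1) + (D - 1) = D + r by omega] at hw
  exact ⟨w, hw⟩



end CPNAux

/-- for any `r ≥ 0` and `Δ ≥ D ≥ 2r+3`, the digraph is
`(D+r)`-reachable: any ordered pair of vertices is joined by a directed walk of
length exactly `D + r`. -/
theorem cpn_restricted_reachable (Δ D r : ℕ) (hD : 2 * r + 3 ≤ D) (hΔ : D ≤ Δ)
    (u v : List ℕ) (hu : IsVtx Δ D u) (hv : IsVtx Δ D v) :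
    ∃ w, IsWalk (adjR Δ D r) u v (D + r) w := by
  by_cases heq : u.getD 0 0 = v.getD (D - 1) 0
  · exact CPNAux.planB hD u v hu hv heq
  · exact CPNAux.planA hD u v hu hv heq
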